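/- Let D > 1 be real and let d ≥ 1 be an integer with d(D-1) > 1. Then (1 + D/(d(D-1) - 1))^{d+1} > (D/(D-1))^D. -/

import Mathlib

theorem key_inequality (D : ℝ) (hD : 1 < D) (d : ℕ) (hd : 1 ≤ d)
    (hdD : 1 < (d : ℝ) * (D - 1)) :
    (D / (D - 1)) ^ D < (1 + D / ((d : ℝ) * (D - 1) - 1)) ^ (d + 1) := by
  have ht : (0:ℝ) < D - 1 := by linarith
  have hDpos : (0:ℝ) < D := by linarith
  have hden : (0:ℝ) < (d:ℝ) * (D - 1) - 1 := by linarith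
  set a : ℝ := D / ((d:ℝ) * (D - 1) - 1) with ha_def
  have ha : 0 < a := div_pos hDpos hden
  have h1a : (0:ℝ) < 1 + a := by linarith
  have hlog1 : Real.log (D / (D - 1)) < D / (D - 1) - 1 :=
    Real.log_lt_sub_one_of_pos (by positivity) (by
      intro h
      have : D = D - 1 := by
        field_simp at h
        linarith
      linarith)
  have hid1 : D * (D / (D - 1) - 1) = D / (D - 1) := by
    field_simp
    ring
  have h1 : D * Real.log (D / (D - 1)) < D / (D - 1) := by
    calc D * Real.log (D / (D - 1)) < D * (D / (D - 1) - 1) :=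
          (mul_lt_mul_iff_right₀ hDpos).2 hlog1
      _ = D / (D - 1) := hid1
  have hlog2 : Real.log (1 / (1 + a)) < 1 / (1 + a) - 1 :=
    Real.log_lt_sub_one_of_pos (by positivity) (by
      intro h
      rw [div_eq_one_iff_eq (ne_of_gt h1a)] at h
      linarith)
  have hlog3 : a / (1 + a) < Real.log (1 + a) := by
    rw [Real.log_div one_ne_zero (ne_of_gt h1a), Real.log_one] at hlog2
    have heq : 1 / (1 + a) - 1 = -(a / (1 + a)) := by
      field_simp
      ring
    rw [heq] at hlog2
    linarith
  have hid2 : ((d:ℝ) + 1) * (a / (1 + a)) = D / (D - 1) := by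
    rw [ha_def]
    have h1 : (d:ℝ) * (D - 1) - 1 ≠ 0 := ne_of_gt hden
    have h2 : (d:ℝ) * (D - 1) - 1 + D ≠ 0 := by positivity
    have h3 : (D:ℝ) - 1 ≠ 0 := ne_of_gt ht
    field_simp
    ring
  have h2 : D / (D - 1) < ((d:ℝ) + 1) * Real.log (1 + a) := by
    rw [← hid2]
    exact mul_lt_mul_of_pos_left hlog3 (by positivity)
  have hrw : (1 + a) ^ (d + 1) = Real.exp (((d:ℝ) + 1) * Real.log (1 + a)) := by
    rw [← Real.exp_log h1a, ← Real.exp_nat_mul, Real.exp_log h1a]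
    push_cast
    ring_nf
  rw [Real.rpow_def_of_pos (by positivity), hrw]
  exact Real.exp_lt_exp.2 (by rw [mul_comm]; linarith)
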